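/- Let d ≥ 1 and let p = (p₁,…,pₙ) be the polynomial map with pᵢ(x) = (−1)^d ∏_{j=1}^{d} (xᵢ − j). Then the solution set of CP(p) equals {α ∈ ℝⁿ : αᵢ ∈ {0,1,…,d} for each i}; in particular, CP(p) has exactly (d+1)ⁿ solutions. -/
import Mathlib

theorem stmt8 (n d : ℕ) (hd : 1 ≤ d) (p : (Fin n → ℝ) → (Fin n → ℝ))
    (hp : ∀ x i, p x i = (-1 : ℝ) ^ d * ∏ j ∈ Finset.Icc 1 d, (x i - (j : ℝ))) :
    {x : Fin n → ℝ | (∀ i, 0 ≤ x i) ∧ (∀ i, 0 ≤ p x i) ∧ ∑ i, x i * p x i = 0}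
      = {x : Fin n → ℝ | ∀ i, ∃ k : ℕ, k ≤ d ∧ x i = (k : ℝ)} ∧
    ({x : Fin n → ℝ | (∀ i, 0 ≤ x i) ∧ (∀ i, 0 ≤ p x i) ∧
        ∑ i, x i * p x i = 0}).ncard = (d + 1) ^ n := by
  -- value of p at x i = 0
  have hzero : ∀ x : Fin n → ℝ, ∀ i, x i = 0 →
      p x i = ∏ j ∈ Finset.Icc 1 d, (j : ℝ) := by
    intro x i hxi
    rw [hp, hxi]
    have : ∀ j ∈ Finset.Icc 1 d, (0 : ℝ) - (j : ℝ) = (-1) * (j : ℝ) := by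
      intro j _; ring
    rw [Finset.prod_congr rfl this, Finset.prod_mul_distrib, Finset.prod_const,
      Nat.card_Icc, Nat.add_sub_cancel, ← mul_assoc, ← pow_add, ← two_mul,
      pow_mul]
    norm_num
  have hprodpos : (0:ℝ) < ∏ j ∈ Finset.Icc 1 d, (j : ℝ) := by
    apply Finset.prod_pos
    intro j hj
    have := (Finset.mem_Icc.mp hj).1
    positivity
  -- value of p when x i = k, 1 ≤ k ≤ d
  have hzero' : ∀ x : Fin n → ℝ, ∀ i, ∀ k : ℕ, 1 ≤ k → k ≤ d → x i = (k : ℝ) →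
      p x i = 0 := by
    intro x i k hk1 hkd hxi
    rw [hp]
    rw [Finset.prod_eq_zero (Finset.mem_Icc.mpr ⟨hk1, hkd⟩) (by rw [hxi]; ring)]
    ring
  have hSeq : {x : Fin n → ℝ | (∀ i, 0 ≤ x i) ∧ (∀ i, 0 ≤ p x i) ∧ ∑ i, x i * p x i = 0}
      = {x : Fin n → ℝ | ∀ i, ∃ k : ℕ, k ≤ d ∧ x i = (k : ℝ)} := by
    ext x
    simp only [Set.mem_setOf_eq]
    constructor
    · rintro ⟨hx, hpx, hsum⟩ i
      have hterm : ∀ i ∈ Finset.univ, (0:ℝ) ≤ x i * p x i := fun i _ =>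
        mul_nonneg (hx i) (hpx i)
      have hi0 : x i * p x i = 0 :=
        (Finset.sum_eq_zero_iff_of_nonneg hterm).mp hsum i (Finset.mem_univ i)
      rcases mul_eq_zero.mp hi0 with h | h
      · exact ⟨0, Nat.zero_le d, by simpa using h⟩
      · rw [hp] at h
        have h2 : ∏ j ∈ Finset.Icc 1 d, (x i - (j : ℝ)) = 0 := by
          rcases mul_eq_zero.mp h with h' | h'
          · exact absurd h' (by positivity)
          · exact h'
        obtain ⟨j, hj, hj0⟩ := Finset.prod_eq_zero_iff.mp h2
        exact ⟨j, (Finset.mem_Icc.mp hj).2, by linarith [sub_eq_zero.mp hj0]⟩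
    · intro h
      have h1 : ∀ i, 0 ≤ x i := by
        intro i; obtain ⟨k, _, hk⟩ := h i; rw [hk]; positivity
      have h2 : ∀ i, 0 ≤ p x i := by
        intro i
        obtain ⟨k, hkd, hk⟩ := h i
        rcases Nat.eq_zero_or_pos k with h0 | h0
        · rw [hzero x i (by rw [hk, h0]; simp)]
          exact hprodpos.le
        · rw [hzero' x i k h0 hkd hk]
      refine ⟨h1, h2, Finset.sum_eq_zero fun i _ => ?_⟩
      obtain ⟨k, hkd, hk⟩ := h i
      rcases Nat.eq_zero_or_pos k with h0 | h0
      · rw [hk, h0]; simp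
      · rw [hzero' x i k h0 hkd hk]; ring
    -- cardinality
  refine ⟨hSeq, ?_⟩
  rw [hSeq]
  have hfin : {x : Fin n → ℝ | ∀ i, ∃ k : ℕ, k ≤ d ∧ x i = (k : ℝ)}
      = ↑(Fintype.piFinset fun _ : Fin n =>
          (Finset.range (d+1)).image (Nat.cast : ℕ → ℝ)) := by
    ext x
    simp only [Set.mem_setOf_eq, Finset.coe_sort_coe, Finset.mem_coe,
      Fintype.mem_piFinset, Finset.mem_image, Finset.mem_range]
    constructor
    · intro h i; obtain ⟨k, hkd, hk⟩ := h i
      exact ⟨k, Nat.lt_succ_of_le hkd, hk.symm⟩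
    · intro h i; obtain ⟨k, hkd, hk⟩ := h i
      exact ⟨k, Nat.lt_succ_iff.mp hkd, hk.symm⟩
  rw [hfin, Set.ncard_coe_finset, Fintype.card_piFinset]
  have : ((Finset.range (d+1)).image (Nat.cast : ℕ → ℝ)).card = d + 1 := by
    rw [Finset.card_image_of_injective _ Nat.cast_injective, Finset.card_range]
  simp [this]
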